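/- Let β be an integer with β ≥ 2 or β ≤ −1, let μ be a real number with μ > −1 and βμ > −1, and let X_1, …, X_n be independent integrable real random variables on a probability space, each with expectation E[X_t] = μ. Define the n-period compounding effect CE_n := (∏_{t=1}^n (1 + βX_t) − 1) − β(∏_{t=1}^n (1 + X_t) − 1). Then E[CE_n] = ((1 + βμ)^n − 1) − β((1 + μ)^n − 1), and this quantity is nonnegative for every n ≥ 1. Moreover, if μ = 0 then E[CE_n] = 0 for all n ≥ 1. -/

import Mathlib

open MeasureTheory ProbabilityTheory

/-- a.e. congruence for `iIndepFun` (real-valued). -/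
lemma my_iIndepFun_ae_eq {Ω ι : Type*} [MeasurableSpace Ω] {P : Measure Ω}
    {f g : ι → Ω → ℝ} (hf : iIndepFun f P)
    (h : ∀ i, f i =ᵐ[P] g i) : iIndepFun g P := by
  rw [iIndepFun_iff_measure_inter_preimage_eq_mul] at hf ⊢
  intro S sets hsets
  have h1 : ∀ i : ι, P (g i ⁻¹' sets i) = P (f i ⁻¹' sets i) := by
    intro i
    refine measure_congr ?_
    refine (h i).mono fun ω hω => ?_
    show (ω ∈ g i ⁻¹' sets i) = (ω ∈ f i ⁻¹' sets i)
    simp only [Set.mem_preimage, hω]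
  have h2 : (⋂ i ∈ S, g i ⁻¹' sets i : Set Ω) =ᵐ[P] (⋂ i ∈ S, f i ⁻¹' sets i) := by
    have hS : ∀ᵐ ω ∂P, ∀ i ∈ S, f i ω = g i ω :=
      (ae_ball_iff S.countable_toSet).2 fun i _ => h i
    refine hS.mono fun ω hω => ?_
    show (ω ∈ ⋂ i ∈ S, g i ⁻¹' sets i) = (ω ∈ ⋂ i ∈ S, f i ⁻¹' sets i)
    simp only [Set.mem_iInter, Set.mem_preimage, eq_iff_iff]
    constructor
    · intro hh i hi; rw [hω i hi]; exact hh i hi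
    · intro hh i hi; rw [← hω i hi]; exact hh i hi
  rw [measure_congr h2, hf S hsets]
  exact Finset.prod_congr rfl fun i _ => (h1 i).symm

/-- Expectation of a finite product of independent, measurable, integrable
real random variables. -/
lemma my_integral_prod {Ω ι : Type*} [MeasurableSpace Ω] {P : Measure Ω}
    [IsProbabilityMeasure P] {X : ι → Ω → ℝ}
    (hindep : iIndepFun X P)
    (hmeas : ∀ i, Measurable (X i)) (hint : ∀ i, Integrable (X i) P) (s : Finset ι) :
    Integrable (fun ω => ∏ i ∈ s, X i ω) P ∧
      ∫ ω, ∏ i ∈ s, X i ω ∂P = ∏ i ∈ s, ∫ ω, X i ω ∂P := by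
  classical
  induction s using Finset.induction_on with
  | empty => simp
  | @insert i s his ih =>
    have hprod : (fun ω => ∏ j ∈ insert i s, X j ω)
        = (fun ω => ∏ j ∈ s, X j ω) * (X i) := by
      funext ω
      simp [Finset.prod_insert his, mul_comm]
    have hIndep : IndepFun (fun ω => ∏ j ∈ s, X j ω) (X i) P := by
      have h := hindep.indepFun_finsetProd_of_notMem hmeas his
      have heq : (∏ j ∈ s, X j) = fun ω => ∏ j ∈ s, X j ω := by
        funext ω; simp
      rwa [heq] at h
    have hInt : Integrable ((fun ω => ∏ j ∈ s, X j ω) * (X i)) P :=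
      hIndep.integrable_mul ih.1 (hint i)
    constructor
    · rw [hprod]; exact hInt
    · have := hIndep.integral_mul_eq_mul_integral ih.1.1 (hint i).1
      rw [hprod]
      show ∫ ω, ((fun ω => ∏ j ∈ s, X j ω) * (X i)) ω ∂P = _
      rw [show ∫ ω, ((fun ω => ∏ j ∈ s, X j ω) * (X i)) ω ∂P
            = ∫ ω, (∏ j ∈ s, X j ω) * X i ω ∂P from rfl]
      have h2 : ∫ ω, (∏ j ∈ s, X j ω) * X i ω ∂P
          = (∫ ω, ∏ j ∈ s, X j ω ∂P) * ∫ ω, X i ω ∂P := this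
      rw [h2, ih.2, Finset.prod_insert his, mul_comm]

/-- the key algebraic inequality. -/
lemma my_ce_nonneg (β : ℤ) (hβ : 2 ≤ β ∨ β ≤ -1) (μ : ℝ) (hμ : -1 < μ)
    (hβμ : -1 < (β : ℝ) * μ) (n : ℕ) :
    0 ≤ ((1 + (β : ℝ) * μ) ^ n - 1) - (β : ℝ) * ((1 + μ) ^ n - 1) := by
  have key : ∀ i : ℕ,
      0 ≤ (β : ℝ) * μ * ((1 + (β : ℝ) * μ) ^ i - (1 + μ) ^ i) := by
    intro i
    rcases hβ with hb | hb
    · have hb' : (2 : ℝ) ≤ (β : ℝ) := by exact_mod_cast hb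
      rcases le_or_gt μ 0 with hm | hm
      · have h1 : (β : ℝ) * μ ≤ 0 := mul_nonpos_of_nonneg_of_nonpos (by linarith) hm
        have h2 : 1 + (β : ℝ) * μ ≤ 1 + μ := by nlinarith
        have h3 : (1 + (β : ℝ) * μ) ^ i ≤ (1 + μ) ^ i :=
          pow_le_pow_left₀ (by linarith) h2 i
        nlinarith [h1, h3]
      · have h1 : 0 ≤ (β : ℝ) * μ := mul_nonneg (by linarith) hm.le
        have h2 : 1 + μ ≤ 1 + (β : ℝ) * μ := by nlinarith
        have h3 : (1 + μ) ^ i ≤ (1 + (β : ℝ) * μ) ^ i :=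
          pow_le_pow_left₀ (by linarith) h2 i
        exact mul_nonneg h1 (by linarith)
    · have hb' : (β : ℝ) ≤ -1 := by exact_mod_cast hb
      rcases le_or_gt μ 0 with hm | hm
      · have h1 : 0 ≤ (β : ℝ) * μ := by nlinarith
        have h2 : 1 + μ ≤ 1 + (β : ℝ) * μ := by nlinarith
        have h3 : (1 + μ) ^ i ≤ (1 + (β : ℝ) * μ) ^ i :=
          pow_le_pow_left₀ (by linarith) h2 i
        exact mul_nonneg h1 (by linarith)
      · have h1 : (β : ℝ) * μ ≤ 0 := mul_nonpos_of_nonpos_of_nonneg (by linarith) hm.le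
        have h2 : 1 + (β : ℝ) * μ ≤ 1 + μ := by nlinarith
        have h3 : (1 + (β : ℝ) * μ) ^ i ≤ (1 + μ) ^ i :=
          pow_le_pow_left₀ (by linarith) h2 i
        nlinarith [h1, h3]
  have h1 := geom_sum_mul (1 + (β : ℝ) * μ) n
  have h2 := geom_sum_mul (1 + μ) n
  have hsum : ∑ i ∈ Finset.range n, (β : ℝ) * μ * ((1 + (β : ℝ) * μ) ^ i - (1 + μ) ^ i)
      = (∑ i ∈ Finset.range n, (1 + (β : ℝ) * μ) ^ i) * ((1 + (β : ℝ) * μ) - 1)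
        - (β : ℝ) * ((∑ i ∈ Finset.range n, (1 + μ) ^ i) * ((1 + μ) - 1)) := by
    rw [Finset.sum_congr rfl (fun i _ => mul_sub ((β : ℝ) * μ) _ _),
      Finset.sum_sub_distrib, ← Finset.mul_sum, ← Finset.mul_sum]
    ring
  have hnn : 0 ≤ ∑ i ∈ Finset.range n, (β : ℝ) * μ * ((1 + (β : ℝ) * μ) ^ i - (1 + μ) ^ i) :=
    Finset.sum_nonneg fun i _ => key i
  rw [hsum, h1, h2] at hnn
  linarith

theorem stmt0 {Ω : Type*} [MeasurableSpace Ω] (P : Measure Ω) [IsProbabilityMeasure P]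
    (β : ℤ) (hβ : 2 ≤ β ∨ β ≤ -1) (μ : ℝ) (hμ : -1 < μ) (hβμ : -1 < (β : ℝ) * μ)
    (n : ℕ) (hn : 1 ≤ n) (X : Fin n → Ω → ℝ)
    (hindep : iIndepFun X P)
    (hint : ∀ t, Integrable (X t) P)
    (hmean : ∀ t, ∫ ω, X t ω ∂P = μ) :
    (∫ ω, (((∏ t, (1 + (β : ℝ) * X t ω)) - 1)
        - (β : ℝ) * ((∏ t, (1 + X t ω)) - 1)) ∂P
      = ((1 + (β : ℝ) * μ) ^ n - 1) - (β : ℝ) * ((1 + μ) ^ n - 1))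
    ∧ ((1 + (β : ℝ) * μ) ^ n - 1) - (β : ℝ) * ((1 + μ) ^ n - 1) ≥ 0
    ∧ (μ = 0 →
        ∫ ω, (((∏ t, (1 + (β : ℝ) * X t ω)) - 1)
          - (β : ℝ) * ((∏ t, (1 + X t ω)) - 1)) ∂P = 0) := by
  classical
  -- measurable versions
  set X' : Fin n → Ω → ℝ := fun t => (hint t).1.mk (X t) with hX'
  have heq : ∀ t, X t =ᵐ[P] X' t := fun t => (hint t).1.ae_eq_mk
  have hmeas' : ∀ t, Measurable (X' t) := fun t => (hint t).1.stronglyMeasurable_mk.measurable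
  have hindep' : iIndepFun X' P := my_iIndepFun_ae_eq hindep heq
  have hint' : ∀ t, Integrable (X' t) P := fun t => (hint t).congr (heq t)
  have hmean' : ∀ t, ∫ ω, X' t ω ∂P = μ := fun t => by
    rw [← integral_congr_ae (heq t)]; exact hmean t
  -- the two product families
  set Yb : Fin n → Ω → ℝ := fun t ω => 1 + (β : ℝ) * X' t ω with hYb
  set Ya : Fin n → Ω → ℝ := fun t ω => 1 + X' t ω with hYa
  have hindepb : iIndepFun Yb P :=
    hindep'.comp (fun _ x => 1 + (β : ℝ) * x)
      (fun _ => measurable_const.add (measurable_id.const_mul _))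
  have hindepa : iIndepFun Ya P :=
    hindep'.comp (fun _ x => 1 + x) (fun _ => measurable_const.add measurable_id)
  have hmeasb : ∀ t, Measurable (Yb t) :=
    fun t => measurable_const.add ((hmeas' t).const_mul _)
  have hmeasa : ∀ t, Measurable (Ya t) := fun t => measurable_const.add (hmeas' t)
  have hintb : ∀ t, Integrable (Yb t) P :=
    fun t => (integrable_const 1).add ((hint' t).const_mul _)
  have hinta : ∀ t, Integrable (Ya t) P := fun t => (integrable_const 1).add (hint' t)
  have hEb : ∀ t, ∫ ω, Yb t ω ∂P = 1 + (β : ℝ) * μ := by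
    intro t
    rw [hYb]
    rw [integral_add (integrable_const 1) ((hint' t).const_mul _), integral_const,
      integral_const_mul, hmean' t]
    simp
  have hEa : ∀ t, ∫ ω, Ya t ω ∂P = 1 + μ := by
    intro t
    rw [hYa]
    rw [integral_add (integrable_const 1) (hint' t), integral_const, hmean' t]
    simp
  obtain ⟨Ib, Eb⟩ := my_integral_prod hindepb hmeasb hintb Finset.univ
  obtain ⟨Ia, Ea⟩ := my_integral_prod hindepa hmeasa hinta Finset.univ
  have Eb' : ∫ ω, ∏ t, Yb t ω ∂P = (1 + (β : ℝ) * μ) ^ n := by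
    rw [Eb, Finset.prod_congr rfl (fun t _ => hEb t)]
    simp
  have Ea' : ∫ ω, ∏ t, Ya t ω ∂P = (1 + μ) ^ n := by
    rw [Ea, Finset.prod_congr rfl (fun t _ => hEa t)]
    simp
  -- the integrand rewritten with the measurable versions
  have hae : (fun ω => (((∏ t, (1 + (β : ℝ) * X t ω)) - 1)
        - (β : ℝ) * ((∏ t, (1 + X t ω)) - 1)))
      =ᵐ[P] (fun ω => ((∏ t, Yb t ω) - 1) - (β : ℝ) * ((∏ t, Ya t ω) - 1)) := by
    have hS : ∀ᵐ ω ∂P, ∀ t, X t ω = X' t ω := ae_all_iff.2 fun t => heq t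
    filter_upwards [hS] with ω hω
    simp only [hYb, hYa]
    congr 2
    · exact Finset.prod_congr rfl fun t _ => by rw [hω t]
    · congr 1
      exact Finset.prod_congr rfl fun t _ => by rw [hω t]
  have hmain : ∫ ω, (((∏ t, (1 + (β : ℝ) * X t ω)) - 1)
        - (β : ℝ) * ((∏ t, (1 + X t ω)) - 1)) ∂P
      = ((1 + (β : ℝ) * μ) ^ n - 1) - (β : ℝ) * ((1 + μ) ^ n - 1) := by
    have Ib1 : Integrable (fun ω => (∏ t, Yb t ω) - 1) P := Ib.sub (integrable_const 1)
    have Ia1 : Integrable (fun ω => (∏ t, Ya t ω) - 1) P := Ia.sub (integrable_const 1)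
    have Ia2 : Integrable (fun ω => (β : ℝ) * ((∏ t, Ya t ω) - 1)) P := Ia1.const_mul _
    rw [integral_congr_ae hae, integral_sub Ib1 Ia2,
      integral_sub Ib (integrable_const 1), integral_const_mul,
      integral_sub Ia (integrable_const 1), integral_const, Eb', Ea']
    simp
  refine ⟨hmain, my_ce_nonneg β hβ μ hμ hβμ n, fun hμ0 => ?_⟩
  rw [hmain, hμ0]
  simp
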